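/- A single-crossing profile over m alternatives contains at most m(m−1)/2 + 1 pairwise distinct votes. -/

import Mathlib

/-- A vote (linear order) over a finite set `A`, encoded as a ranking:
`v a < v b` means `a` is strictly preferred to `b`. -/
abbrev Vote (A : Type*) [Fintype A] := A ≃ Fin (Fintype.card A)

variable {A : Type*} [Fintype A] [DecidableEq A]

/-- `P` is single-crossing with respect to the given ordering of the voters. -/
def SCGivenOrder {n : ℕ} (P : Fin n → Vote A) : Prop :=
  ∀ a b : A, ∀ i j k : Fin n, i ≤ j → j ≤ k →
    P i a < P i b → P k a < P k b → P j a < P j b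

/-- Two votes inducing the same strict order are equal. -/
lemma vote_ext (e f : Vote A) (h : ∀ a b : A, e a < e b ↔ f a < f b) : e = f := by
  have hsm : StrictMono (f ∘ e.symm) := by
    intro x y hxy
    have : e (e.symm x) < e (e.symm y) := by simpa using hxy
    simpa using (h _ _).1 this
  have hinj : Function.Injective (f ∘ e.symm) := hsm.injective
  have hsurj : Function.Surjective (f ∘ e.symm) :=
    Finite.surjective_of_injective hinj
  have hid : f ∘ e.symm = id := by
    apply (hsm.range_inj strictMono_id).1
    rw [Set.range_eq_univ.2 hsurj, Set.range_id]
  ext a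
  have := congrFun hid (e a)
  simp only [Function.comp_apply, Equiv.symm_apply_apply, id_eq] at this
  rw [this]

/-- A single-crossing profile over `m` alternatives contains at most
`m(m-1)/2 + 1` pairwise distinct votes. -/
theorem singleCrossing_distinct_votes_bound {n : ℕ} (P : Fin n → Vote A)
    (hsc : ∃ σ : Equiv.Perm (Fin n), SCGivenOrder (P ∘ σ)) :
    Set.ncard (Set.range P) ≤ Fintype.card A * (Fintype.card A - 1) / 2 + 1 := by
  obtain ⟨σ, hsc⟩ := hsc
  set Q : Fin n → Vote A := P ∘ σ with hQ
  have hrange : Set.range P = Set.range Q := (σ.surjective.range_comp P).symm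
  rw [hrange]
  rcases Nat.eq_zero_or_pos n with hn | hn
  · subst hn
    rw [Set.range_eq_empty, Set.ncard_empty]
    omega
  set z : Fin n := ⟨0, hn⟩ with hz
  set C := Fintype.card A * (Fintype.card A - 1) / 2 with hC
  classical
  -- disagreement count with the first vote
  set g : Vote A → ℕ := fun v =>
    (Finset.univ.filter (fun p : A × A => Q z p.1 < Q z p.2 ∧ v p.2 < v p.1)).card with hg
  set D : Fin n → Finset (A × A) := fun i =>
    Finset.univ.filter (fun p : A × A => Q z p.1 < Q z p.2 ∧ Q i p.2 < Q i p.1) with hD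
  have hgD : ∀ i, g (Q i) = (D i).card := fun i => rfl
  -- monotonicity of disagreement sets
  have hmono : ∀ i j : Fin n, i ≤ j → D i ⊆ D j := by
    intro i j hij p hp
    simp only [hD, Finset.mem_filter, Finset.mem_univ, true_and] at hp ⊢
    obtain ⟨h1, h2⟩ := hp
    refine ⟨h1, ?_⟩
    by_contra hcon
    push_neg at hcon
    have hne : p.1 ≠ p.2 := by
      intro h; rw [h] at h1; exact lt_irrefl _ h1
    have hlt : Q j p.1 < Q j p.2 :=
      lt_of_le_of_ne hcon (fun h => hne ((Q j).injective h))
    have hzi : z ≤ i := by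
      simp [hz, Fin.le_def]
    exact absurd (hsc p.1 p.2 z i j hzi hij h1 hlt) (not_lt.2 h2.le)
  -- injectivity of g on the range of Q
  have hinj : Set.InjOn g (Set.range Q) := by
    rintro v ⟨i, rfl⟩ w ⟨j, rfl⟩ hgij
    have heq : D i = D j := by
      rcases le_total i j with hij | hij
      · exact Finset.eq_of_subset_of_card_le (hmono i j hij)
          (by rw [← hgD, ← hgD, hgij])
      · exact (Finset.eq_of_subset_of_card_le (hmono j i hij)
          (by rw [← hgD, ← hgD, hgij])).symm
    refine vote_ext _ _ (fun a b => ?_)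
    rcases eq_or_ne a b with rfl | hab
    · simp
    have key : ∀ c d : A, Q z c < Q z d →
          (Q i d < Q i c ↔ Q j d < Q j c) := by
        intro c d hcd
        constructor
        · intro h
          have : (c, d) ∈ D i := by
            simp [hD, hcd, h]
          rw [heq] at this
          simp only [hD, Finset.mem_filter] at this
          exact this.2.2
        · intro h
          have : (c, d) ∈ D j := by
            simp [hD, hcd, h]
          rw [← heq] at this
          simp only [hD, Finset.mem_filter] at this
          exact this.2.2
    have hflip : ∀ (i : Fin n), ¬ Q i b < Q i a ↔ Q i a < Q i b := by
      intro k
      constructor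
      · intro h
        exact lt_of_le_of_ne (not_lt.1 h) (fun hh => hab ((Q k).injective hh))
      · exact fun h => asymm h
    rcases lt_trichotomy (Q z a) (Q z b) with hzl | hze | hzl
    · rw [← hflip i, ← hflip j, key a b hzl]
    · exact absurd ((Q z).injective (le_antisymm hze.le hze.ge)) hab
    · constructor
      · intro h; exact (key b a hzl).1 h
      · intro h; exact (key b a hzl).2 h
  -- each g value is at most C
  have hbound : ∀ v : Vote A, g v ≤ C := by
    intro v
    have hsub : (Finset.univ.filter (fun p : A × A => Q z p.1 < Q z p.2 ∧ v p.2 < v p.1)).card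
        ≤ ((Finset.univ : Finset A).powersetCard 2).card := by
      apply Finset.card_le_card_of_injOn (fun p => {p.1, p.2})
      · intro p hp
        simp only [Finset.mem_coe, Finset.mem_filter, Finset.mem_univ, true_and] at hp
        have hne : p.1 ≠ p.2 := fun h => by rw [h] at hp; exact lt_irrefl _ hp.1
        simp [Finset.mem_powersetCard, Finset.card_pair hne]
      · intro p hp q hq hpq
        simp only [Finset.mem_coe, Finset.mem_filter, Finset.mem_univ, true_and] at hp hq
        simp only at hpq
        have h1 : p.1 ∈ ({q.1, q.2} : Finset A) := by rw [← hpq]; simp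
        have h2 : p.2 ∈ ({q.1, q.2} : Finset A) := by rw [← hpq]; simp
        simp only [Finset.mem_insert, Finset.mem_singleton] at h1 h2
        have hpne : p.1 ≠ p.2 := fun h => by rw [h] at hp; exact lt_irrefl _ hp.1
        rcases h1 with h1 | h1 <;> rcases h2 with h2 | h2
        · exact absurd (h1 ▸ h2 ▸ hpne) (fun h => h rfl)
        · exact Prod.ext h1 h2
        · exfalso
          rw [h1, h2] at hp
          exact absurd (hp.1.trans hq.1) (lt_irrefl _)
        · exact absurd (h1 ▸ h2 ▸ hpne) (fun h => h rfl)
    rw [Finset.card_powersetCard, Finset.card_univ, Nat.choose_two_right] at hsub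
    exact hsub
  -- conclude
  have himg : g '' Set.range Q ⊆ Set.Iic C := by
    rintro x ⟨v, _, rfl⟩
    exact hbound v
  calc Set.ncard (Set.range Q) = Set.ncard (g '' Set.range Q) :=
        (Set.ncard_image_of_injOn hinj).symm
    _ ≤ Set.ncard (Set.Iic C) := Set.ncard_le_ncard himg (Set.finite_Iic C)
    _ = C + 1 := by rw [← Finset.coe_Iic, Set.ncard_coe_finset, Nat.card_Iic]
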